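/- Let s > 1 be a real number and define the sequence a by a_n = (1+n)/(s+n). Then for all integers m ≥ 1 and n ≥ 0, (∇ᵐ a)_n = (1−s)·m! / ∏_{i=0}^{m} (s+n+i); in particular (∇ᵐ a)_n < 0 for all m ≥ 1 and n ≥ 0, so a is completely alternating. (Hence the weighted shift with weights squared a_n, i.e., with Berger measure (s−1)(1−t)^{s−2} dt on [0,1], is moment infinitely divisible.) -/

import Mathlib

/-- The `m`-th iterated forward difference of a sequence, evaluated at `k`. -/
noncomputable def fdiff (a : ℕ → ℝ) (m k : ℕ) : ℝ :=
  ∑ i ∈ Finset.range (m + 1), (-1 : ℝ) ^ i * (m.choose i : ℝ) * a (k + i)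

lemma fdiff_succ (a : ℕ → ℝ) (m k : ℕ) :
    fdiff a (m + 1) k = fdiff a m k - fdiff a m (k + 1) := by
  unfold fdiff
  rw [Finset.sum_range_succ' (fun i => (-1 : ℝ) ^ i * ((m+1).choose i : ℝ) * a (k + i))]
  have h1 : ∀ i ∈ Finset.range (m + 1),
      (-1 : ℝ) ^ (i+1) * ((m+1).choose (i+1) : ℝ) * a (k + (i+1))
        = (-1 : ℝ) ^ (i+1) * (m.choose i : ℝ) * a (k + (i+1))
          + (-1 : ℝ) ^ (i+1) * (m.choose (i+1) : ℝ) * a (k + (i+1)) := by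
    intro i _
    rw [Nat.choose_succ_succ]
    push_cast
    ring
  rw [Finset.sum_congr rfl h1, Finset.sum_add_distrib]
  have h2 : ∑ i ∈ Finset.range (m+1), (-1:ℝ)^(i+1) * (m.choose i : ℝ) * a (k + (i+1))
      = - ∑ i ∈ Finset.range (m+1), (-1:ℝ)^i * (m.choose i : ℝ) * a (k + 1 + i) := by
    rw [← Finset.sum_neg_distrib]
    apply Finset.sum_congr rfl
    intro i _
    have : k + (i + 1) = k + 1 + i := by ring
    rw [this]; ring
  have h3 : ∑ i ∈ Finset.range (m+1), (-1:ℝ)^(i+1) * (m.choose (i+1) : ℝ) * a (k + (i+1))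
        + (-1:ℝ)^0 * ((m+1).choose 0 : ℝ) * a (k + 0)
      = ∑ i ∈ Finset.range (m+1), (-1:ℝ)^i * (m.choose i : ℝ) * a (k + i) := by
    rw [Finset.sum_range_succ' (fun i => (-1:ℝ)^i * (m.choose i : ℝ) * a (k + i))]
    simp only [Nat.choose_zero_right, pow_zero, Nat.cast_one, add_zero, Nat.cast_ofNat]
    rw [Finset.sum_range_succ]
    simp
  rw [h2]
  linarith [h3]

theorem stmt19 (s : ℝ) (hs : 1 < s) :
    ∀ m : ℕ, 1 ≤ m → ∀ n : ℕ,
      fdiff (fun j => (1 + (j : ℝ)) / (s + j)) m n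
          = (1 - s) * (Nat.factorial m : ℝ) /
              ∏ i ∈ Finset.range (m + 1), (s + n + i) ∧
      fdiff (fun j => (1 + (j : ℝ)) / (s + j)) m n < 0 := by
  have hpos : ∀ n i : ℕ, (0:ℝ) < s + n + i := by
    intro n i
    have : (0:ℝ) ≤ (n:ℝ) := Nat.cast_nonneg n
    have : (0:ℝ) ≤ (i:ℝ) := Nat.cast_nonneg i
    nlinarith [Nat.cast_nonneg (α := ℝ) n, Nat.cast_nonneg (α := ℝ) i]
  have key : ∀ m : ℕ, 1 ≤ m → ∀ n : ℕ,
      fdiff (fun j => (1 + (j : ℝ)) / (s + j)) m n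
        = (1 - s) * (Nat.factorial m : ℝ) / ∏ i ∈ Finset.range (m + 1), (s + n + i) := by
    intro m hm
    induction m, hm using Nat.le_induction with
    | base =>
      intro n
      unfold fdiff
      rw [Finset.sum_range_succ, Finset.sum_range_succ, Finset.sum_range_zero,
        Finset.prod_range_succ, Finset.prod_range_succ, Finset.prod_range_zero]
      have h0 := hpos n 0
      have h1 := hpos n 1
      push_cast [Nat.choose_zero_right, Nat.choose_self] at h0 h1 ⊢
      field_simp
      ring
    | succ m hm ih =>
      intro n
      rw [fdiff_succ, ih n, ih (n+1)]
      have hQshift : (∏ i ∈ Finset.range (m+1), (s + (↑(n+1):ℝ) + i))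
          = ∏ i ∈ Finset.range (m+1), (s + n + 1 + i) := by
        apply Finset.prod_congr rfl
        intro i _
        push_cast
        ring
      have hbig : (∏ i ∈ Finset.range (m+2), (s + n + i))
          = (s + n) * ∏ i ∈ Finset.range (m+1), (s + n + 1 + i) := by
        rw [Finset.prod_range_succ' (fun i => (s + n + i))]
        simp only [Nat.cast_zero, add_zero, Nat.cast_add, Nat.cast_one]
        rw [mul_comm]
        congr 1
        apply Finset.prod_congr rfl
        intro i _
        ring
      have hsmall : (∏ i ∈ Finset.range (m+1), (s + n + i)) * (s + n + (m+1))
          = (s + n) * ∏ i ∈ Finset.range (m+1), (s + n + 1 + i) := by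
        rw [← hbig]
        rw [Finset.prod_range_succ (fun i => (s + n + i)) (m+1)]
        push_cast
        ring
      have hQpos : (0:ℝ) < ∏ i ∈ Finset.range (m+1), (s + n + 1 + i) := by
        apply Finset.prod_pos
        intro i _
        have := hpos (n+1) i
        push_cast at this ⊢
        linarith
      have hPpos : (0:ℝ) < ∏ i ∈ Finset.range (m+1), (s + n + i) :=
        Finset.prod_pos (fun i _ => hpos n i)
      have h0 := hpos n 0
      have hm1 := hpos n (m+1)
      push_cast at hm1
      rw [hQshift, Nat.factorial_succ]
      have hP : (∏ i ∈ Finset.range (m+1), (s + n + i))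
          = (s + n) * (∏ i ∈ Finset.range (m+1), (s + n + 1 + i)) / (s + n + (m+1)) := by
        field_simp
        linarith [hsmall]
      rw [hbig, hP]
      have hQne : (∏ i ∈ Finset.range (m+1), (s + n + 1 + i)) ≠ 0 := ne_of_gt hQpos
      push_cast at h0
      field_simp
      push_cast
      ring
  intro m hm n
  refine ⟨key m hm n, ?_⟩
  rw [key m hm n]
  apply div_neg_of_neg_of_pos
  · have : (0:ℝ) < Nat.factorial m := by positivity
    nlinarith
  · exact Finset.prod_pos (fun i _ => hpos n i)
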